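/- Let α and β be complex n×s matrices both of rank s (in particular n ≥ s). If α αᵀ = β βᵀ, then there exists a complex s×s matrix g with gᵀ g = I_s (i.e. g ∈ O(s,ℂ)) such that β = α g. Hence on the open stratum of full-rank matrices, the fibers of the Hilbert map α ↦ α αᵀ are exactly the O(s,ℂ)-orbits, so the Hilbert map separates closed orbits there. -/
import Mathlib


open Matrix

/-- A complex matrix with full row rank has a right inverse. -/
lemma exists_right_inv_aux {m k : ℕ} (A : Matrix (Fin k) (Fin m) ℂ) (h : A.rank = k) :
    ∃ D : Matrix (Fin m) (Fin k) ℂ, A * D = 1 := by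
  have hsurj : Function.Surjective A.mulVecLin := by
    rw [← LinearMap.range_eq_top]
    apply Submodule.eq_top_of_finrank_eq
    rw [← Matrix.rank, h]
    simp [Module.finrank_fintype_fun_eq_card]
  obtain ⟨g, hg⟩ := A.mulVecLin.exists_rightInverse_of_surjective
    (LinearMap.range_eq_top.mpr hsurj)
  refine ⟨LinearMap.toMatrix' g, ?_⟩
  apply Matrix.toLin'.injective
  rw [Matrix.toLin'_mul, Matrix.toLin'_one, Matrix.toLin'_apply', Matrix.toLin'_toMatrix']
  exact hg

/-- If `α` and `β` are complex `n×s` matrices of full rank `s` with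
`α αᵀ = β βᵀ`, then `β = α g` for some `g ∈ O(s,ℂ)` (i.e. `gᵀ g = 1`). Hence
on the open stratum of full-rank matrices, the fibers of the Hilbert map
`α ↦ α αᵀ` are exactly the `O(s,ℂ)`-orbits, so the Hilbert map separates
closed orbits there. -/
theorem hilbert_map_fibers_full_rank (n s : ℕ)
    (α β : Matrix (Fin n) (Fin s) ℂ) (hα : α.rank = s) (hβ : β.rank = s)
    (h : α * αᵀ = β * βᵀ) :
    ∃ g : Matrix (Fin s) (Fin s) ℂ, gᵀ * g = 1 ∧ β = α * g := by
  obtain ⟨D, hD⟩ := exists_right_inv_aux αᵀ (by rw [Matrix.rank_transpose]; exact hα)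
  obtain ⟨E, hE⟩ := exists_right_inv_aux βᵀ (by rw [Matrix.rank_transpose]; exact hβ)
  set g : Matrix (Fin s) (Fin s) ℂ := αᵀ * E with hg
  have hβg : β = α * g := by
    calc β = β * (βᵀ * E) := by rw [hE, Matrix.mul_one]
    _ = (β * βᵀ) * E := by rw [Matrix.mul_assoc]
    _ = (α * αᵀ) * E := by rw [h]
    _ = α * g := by rw [Matrix.mul_assoc]
  -- left inverse of α
  have hDα : Dᵀ * α = 1 := by
    have := congrArg Matrix.transpose hD
    simpa [Matrix.transpose_mul] using this
  have hggT : g * gᵀ = 1 := by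
    have h1 : α * αᵀ = α * (g * gᵀ) * αᵀ := by
      calc α * αᵀ = β * βᵀ := h
      _ = (α * g) * (α * g)ᵀ := by rw [hβg]
      _ = α * (g * gᵀ) * αᵀ := by
          rw [Matrix.transpose_mul]
          simp only [Matrix.mul_assoc]
    have h2 := congrArg (fun M => Dᵀ * M * D) h1
    simp only [Matrix.mul_assoc] at h2
    rw [hD] at h2
    simp only [Matrix.mul_one] at h2
    rw [← Matrix.mul_assoc, ← Matrix.mul_assoc, hDα, Matrix.one_mul] at h2
    exact h2.symm
  exact ⟨g, mul_eq_one_comm.mp hggT, hβg⟩
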